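/- For any sequence of vectors F = {f_n}_{n=1}^N in R^M, the sequence of spectra {λ_{n;m}}_{m=1}^M of the partial frame operators F_n F_n* = Σ_{m=1}^n f_m f_m* forms a valid sequence of outer eigensteps for the spectrum of FF* and the norms μ_n = ‖f_n‖²: namely λ_{0;m}=0, λ_{N;m} is the spectrum of FF*, consecutive spectra interlace, and Σ_{m=1}^M λ_{n;m} = Σ_{m=1}^n μ_m. -/

import Mathlib

/-- Same-length interlacing `{α} ⊑ {β}`: `α_M ≤ β_M` and `β_{m+1} ≤ α_m ≤ β_m` for `m < M`.
For antitone sequences this is equivalent to: `α_i ≤ β_i` for all `i`, and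
`β_{i+1} ≤ α_i` for consecutive indices. -/
def InterlacesOn (M : ℕ) (α β : Fin M → ℝ) : Prop :=
  (∀ i : Fin M, α i ≤ β i) ∧ (∀ i j : Fin M, (i : ℕ) + 1 = (j : ℕ) → β j ≤ α i)

section AuxEigensteps


open Matrix Polynomial

variable {M : ℕ}

theorem charpoly_unitary_conj (U A : Matrix (Fin M) (Fin M) ℝ) (h1 : star U * U = 1)
    (h2 : U * star U = 1) : (U * A * star U).charpoly = A.charpoly := by
  unfold Matrix.charpoly
  have hs : ∀ B : Matrix (Fin M) (Fin M) ℝ[X],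
      B * (scalar (Fin M)) X = (scalar (Fin M)) X * B :=
    fun B => (scalar_commute X (fun r => (Commute.all _ _)) B).symm
  have key : charmatrix (U * A * star U) =
      C.mapMatrix U * charmatrix A * C.mapMatrix (star U) := by
    simp only [charmatrix]
    rw [mul_sub, sub_mul]
    congr 1
    · rw [mul_assoc, ← hs, ← mul_assoc, ← RingHom.map_mul, h2]
      simp
    · rw [← RingHom.map_mul, ← RingHom.map_mul]
  rw [key, Matrix.det_mul, Matrix.det_mul, mul_comm, ← mul_assoc, ← Matrix.det_mul,
    ← RingHom.map_mul, h1]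
  simp

theorem roots_charpoly_diagonal (d : Fin M → ℝ) :
    (Matrix.diagonal d).charpoly.roots = Multiset.map d Finset.univ.val := by
  rw [charpoly_of_upperTriangular _ (blockTriangular_diagonal d)]
  have : ∏ i, (X - C ((diagonal d) i i)) =
      ((Finset.univ.val.map d).map (fun a => X - C a)).prod := by
    simp [Finset.prod, Multiset.map_map, Function.comp_def]
  rw [this, roots_multiset_prod_X_sub_C]

theorem roots_charpoly_isHermitian {A : Matrix (Fin M) (Fin M) ℝ} (hA : A.IsHermitian) :
    A.charpoly.roots = Multiset.map hA.eigenvalues Finset.univ.val := by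
  have hU := (Matrix.mem_unitaryGroup_iff').mp (hA.eigenvectorUnitary).2
  have hU' := (Matrix.mem_unitaryGroup_iff).mp (hA.eigenvectorUnitary).2
  have := hA.spectral_theorem
  conv_lhs => rw [this, Unitary.conjStarAlgAut_apply, charpoly_unitary_conj _ _ hU hU']
  have : (RCLike.ofReal ∘ hA.eigenvalues : Fin M → ℝ) = hA.eigenvalues := rfl
  rw [this, roots_charpoly_diagonal]

theorem antitone_eq_of_multiset_map_eq {g h : Fin M → ℝ} (hg : Antitone g) (hh : Antitone h)
    (heq : Multiset.map g Finset.univ.val = Multiset.map h Finset.univ.val) : g = h := by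
  have huniv : (Finset.univ.val : Multiset (Fin M)) = ↑(List.finRange M) := rfl
  rw [huniv] at heq
  have h1 : (List.finRange M).map g = List.ofFn g := (List.ofFn_eq_map).symm
  have h2 : (List.finRange M).map h = List.ofFn h := (List.ofFn_eq_map).symm
  rw [show Multiset.map g ↑(List.finRange M) = ↑((List.finRange M).map g) from rfl,
    show Multiset.map h ↑(List.finRange M) = ↑((List.finRange M).map h) from rfl,
    h1, h2, Multiset.coe_eq_coe] at heq
  have sg : (List.ofFn g).SortedGE := by
    rw [List.sortedGE_iff_pairwise, List.pairwise_ofFn]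
    exact fun i j hij => hg hij.le
  have sh : (List.ofFn h).SortedGE := by
    rw [List.sortedGE_iff_pairwise, List.pairwise_ofFn]
    exact fun i j hij => hh hij.le
  exact List.ofFn_injective (List.Perm.eq_of_sortedGE sg sh heq)

theorem exists_basis_eigen {A : Matrix (Fin M) (Fin M) ℝ} (hA : A.IsHermitian)
    {lam : Fin M → ℝ} (hlam : Antitone lam)
    (h : A.charpoly.roots = Multiset.map lam Finset.univ.val) :
    ∃ b : OrthonormalBasis (Fin M) ℝ (EuclideanSpace ℝ (Fin M)),
      ∀ j, A *ᵥ ⇑(b j) = lam j • ⇑(b j) := by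
  set e : Equiv.Perm (Fin M) := Fin.revPerm.trans (Tuple.sort hA.eigenvalues) with he
  have hanti : Antitone (hA.eigenvalues ∘ e) := by
    intro i j hij
    exact Tuple.monotone_sort hA.eigenvalues (Fin.rev_le_rev.mpr hij)
  have hmap : Multiset.map (hA.eigenvalues ∘ e) Finset.univ.val =
      Multiset.map hA.eigenvalues Finset.univ.val := by
    rw [← Multiset.map_map, Multiset.map_univ_val_equiv]
  have hle : lam = hA.eigenvalues ∘ e := by
    apply antitone_eq_of_multiset_map_eq hlam hanti
    rw [hmap, ← roots_charpoly_isHermitian hA, h]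
  refine ⟨hA.eigenvectorBasis.reindex e.symm, fun j => ?_⟩
  rw [OrthonormalBasis.reindex_apply, Equiv.symm_symm, hA.mulVec_eigenvectorBasis]
  rw [hle]; rfl
open Finset Submodule

variable {M : ℕ}

theorem exists_ne_zero_mem_inf (V W : Submodule ℝ (EuclideanSpace ℝ (Fin M)))
    (h : M < Module.finrank ℝ V + Module.finrank ℝ W) :
    ∃ x : EuclideanSpace ℝ (Fin M), x ∈ V ⊓ W ∧ x ≠ 0 := by
  have htot := Submodule.finrank_sup_add_finrank_inf_eq V W
  have hsup : Module.finrank ℝ ↥(V ⊔ W) ≤ M := by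
    simpa [finrank_euclideanSpace] using Submodule.finrank_le (V ⊔ W)
  have hpos : 0 < Module.finrank ℝ ↥(V ⊓ W) := by omega
  have : (V ⊓ W) ≠ ⊥ := by
    intro hbot
    rw [hbot, finrank_bot] at hpos
    exact lt_irrefl 0 hpos
  exact Submodule.exists_mem_ne_zero_of_ne_bot this

theorem finrank_span_onb_image (b : OrthonormalBasis (Fin M) ℝ (EuclideanSpace ℝ (Fin M)))
    (S : Finset (Fin M)) :
    Module.finrank ℝ ↥(span ℝ (b '' ↑S)) = S.card := by
  have li : LinearIndependent ℝ (fun j : (S : Set (Fin M)) => b j) :=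
    b.orthonormal.linearIndependent.comp _ Subtype.val_injective
  have : Set.range (fun j : (S : Set (Fin M)) => b j) = b '' ↑S := by
    rw [← Set.image_eq_range]
  rw [← this, finrank_span_eq_card li]
  simp

theorem rayleigh_expand (T : EuclideanSpace ℝ (Fin M) →ₗ[ℝ] EuclideanSpace ℝ (Fin M))
    (b : OrthonormalBasis (Fin M) ℝ (EuclideanSpace ℝ (Fin M))) (lam : Fin M → ℝ)
    (hEig : ∀ j, T (b j) = lam j • (b j)) (x : EuclideanSpace ℝ (Fin M)) :
    (inner ℝ x (T x) : ℝ) = ∑ j, lam j * (inner ℝ (b j) x : ℝ)^2 ∧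
    ‖x‖^2 = ∑ j, (inner ℝ (b j) x : ℝ)^2 := by
  set c : Fin M → ℝ := fun j => (inner ℝ (b j) x : ℝ) with hc
  have hxc : x = ∑ j, c j • (b j) := by
    conv_lhs => rw [← b.sum_repr x]
    exact Finset.sum_congr rfl fun j _ => by rw [b.repr_apply_apply]
  have expand : ∀ a : Fin M → ℝ, (inner ℝ x (∑ j, a j • b j) : ℝ) = ∑ j, a j * c j := by
    intro a
    rw [inner_sum]
    refine Finset.sum_congr rfl fun j _ => ?_
    rw [real_inner_smul_right, real_inner_comm]
  constructor
  · have hTx : T x = ∑ j, (c j * lam j) • b j := by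
      conv_lhs => rw [hxc, map_sum]
      refine Finset.sum_congr rfl fun j _ => ?_
      rw [LinearMap.map_smul, hEig j, smul_smul]
    rw [hTx, expand]
    exact Finset.sum_congr rfl fun j _ => by ring
  · have : ‖x‖^2 = (inner ℝ x x : ℝ) := (real_inner_self_eq_norm_sq x).symm
    rw [this]
    nth_rewrite 2 [hxc]
    rw [show (inner ℝ x (∑ j, c j • b j) : ℝ) = ∑ j, c j * c j from expand c]
    exact Finset.sum_congr rfl fun j _ => by ring

theorem inner_eq_zero_of_mem_span (b : OrthonormalBasis (Fin M) ℝ (EuclideanSpace ℝ (Fin M)))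
    (S : Finset (Fin M)) {j : Fin M} (hj : j ∉ S) {x : EuclideanSpace ℝ (Fin M)}
    (hx : x ∈ span ℝ (b '' ↑S)) : (inner ℝ (b j) x : ℝ) = 0 := by
  induction hx using Submodule.span_induction with
  | mem y hy =>
    obtain ⟨i, hi, rfl⟩ := hy
    exact b.orthonormal.2 (fun h => hj (h ▸ hi))
  | zero => exact inner_zero_right _
  | add y z _ _ hy hz => rw [inner_add_right, hy, hz, add_zero]
  | smul a y _ hy => rw [real_inner_smul_right, hy, mul_zero]

theorem rayleigh_le_of_mem_span (T : EuclideanSpace ℝ (Fin M) →ₗ[ℝ] EuclideanSpace ℝ (Fin M))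
    (b : OrthonormalBasis (Fin M) ℝ (EuclideanSpace ℝ (Fin M))) (lam : Fin M → ℝ)
    (hEig : ∀ j, T (b j) = lam j • (b j)) (S : Finset (Fin M)) (t : ℝ)
    (hS : ∀ j ∈ S, lam j ≤ t) {x : EuclideanSpace ℝ (Fin M)}
    (hx : x ∈ span ℝ (b '' ↑S)) : (inner ℝ x (T x) : ℝ) ≤ t * ‖x‖^2 := by
  obtain ⟨h1, h2⟩ := rayleigh_expand T b lam hEig x
  rw [h1, h2, Finset.mul_sum]
  refine Finset.sum_le_sum fun j _ => ?_
  by_cases hj : j ∈ S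
  · exact mul_le_mul_of_nonneg_right (hS j hj) (sq_nonneg _)
  · rw [inner_eq_zero_of_mem_span b S hj hx]
    simp

theorem rayleigh_ge_of_mem_span (T : EuclideanSpace ℝ (Fin M) →ₗ[ℝ] EuclideanSpace ℝ (Fin M))
    (b : OrthonormalBasis (Fin M) ℝ (EuclideanSpace ℝ (Fin M))) (lam : Fin M → ℝ)
    (hEig : ∀ j, T (b j) = lam j • (b j)) (S : Finset (Fin M)) (t : ℝ)
    (hS : ∀ j ∈ S, t ≤ lam j) {x : EuclideanSpace ℝ (Fin M)}
    (hx : x ∈ span ℝ (b '' ↑S)) : t * ‖x‖^2 ≤ (inner ℝ x (T x) : ℝ) := by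
  obtain ⟨h1, h2⟩ := rayleigh_expand T b lam hEig x
  rw [h1, h2, Finset.mul_sum]
  refine Finset.sum_le_sum fun j _ => ?_
  by_cases hj : j ∈ S
  · exact mul_le_mul_of_nonneg_right (hS j hj) (sq_nonneg _)
  · rw [inner_eq_zero_of_mem_span b S hj hx]
    simp

theorem finrank_inf_ge (V W : Submodule ℝ (EuclideanSpace ℝ (Fin M))) :
    Module.finrank ℝ V + Module.finrank ℝ W ≤ M + Module.finrank ℝ ↥(V ⊓ W) := by
  have htot := Submodule.finrank_sup_add_finrank_inf_eq V W
  have hsup : Module.finrank ℝ ↥(V ⊔ W) ≤ M := by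
    simpa [finrank_euclideanSpace] using Submodule.finrank_le (V ⊔ W)
  omega

theorem isHermitian_sum_vecMulVec (n : ℕ) (f : ℕ → Fin M → ℝ) :
    (∑ k ∈ Finset.range n, Matrix.vecMulVec (f k) (f k)).IsHermitian := by
  unfold Matrix.IsHermitian
  ext i j
  simp [Matrix.conjTranspose_apply, Matrix.sum_apply, Matrix.vecMulVec_apply, mul_comm]

theorem toEuclideanLin_eig {A : Matrix (Fin M) (Fin M) ℝ} {u : EuclideanSpace ℝ (Fin M)}
    {t : ℝ} (h : A *ᵥ ⇑u = t • ⇑u) : Matrix.toEuclideanLin A u = t • u := by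
  apply PiLp.ext
  intro i
  exact congrFun h i

theorem inner_toEuclideanLin (A : Matrix (Fin M) (Fin M) ℝ) (x : EuclideanSpace ℝ (Fin M)) :
    (inner ℝ x (Matrix.toEuclideanLin A x) : ℝ) = (x : Fin M → ℝ) ⬝ᵥ (A *ᵥ x) := by
  simp only [PiLp.inner_apply, dotProduct, Matrix.toEuclideanLin_apply, RCLike.inner_apply,
    conj_trivial]
  exact Finset.sum_congr rfl fun _ _ => mul_comm _ _

theorem vecMulVec_quadratic (v x : Fin M → ℝ) :
    x ⬝ᵥ (Matrix.vecMulVec v v *ᵥ x) = (v ⬝ᵥ x)^2 := by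
  have : ∀ i, (Matrix.vecMulVec v v *ᵥ x) i = v i * (v ⬝ᵥ x) := by
    intro i
    simp [Matrix.mulVec, Matrix.vecMulVec_apply, dotProduct, Finset.mul_sum, mul_assoc]
  simp only [dotProduct, this]
  rw [show ∑ i, x i * (v i * ∑ j, v j * x j) = (∑ i, v i * x i) * (∑ j, v j * x j) by
    rw [Finset.sum_mul]; exact Finset.sum_congr rfl fun i _ => by ring]
  ring


theorem interlace_step {A : Matrix (Fin M) (Fin M) ℝ} {v : Fin M → ℝ}
    (hA : A.IsHermitian) (hB : (A + Matrix.vecMulVec v v).IsHermitian)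
    {lamA lamB : Fin M → ℝ} (hla : Antitone lamA) (hlb : Antitone lamB)
    (hra : A.charpoly.roots = Multiset.map lamA Finset.univ.val)
    (hrb : (A + Matrix.vecMulVec v v).charpoly.roots = Multiset.map lamB Finset.univ.val) :
    InterlacesOn M lamA lamB := by
  obtain ⟨bA, hbA⟩ := exists_basis_eigen hA hla hra
  obtain ⟨bB, hbB⟩ := exists_basis_eigen hB hlb hrb
  set TA := Matrix.toEuclideanLin A with hTA
  set TB := Matrix.toEuclideanLin (A + Matrix.vecMulVec v v) with hTB
  have hEigA : ∀ j, TA (bA j) = lamA j • bA j := fun j => toEuclideanLin_eig (hbA j)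
  have hEigB : ∀ j, TB (bB j) = lamB j • bB j := fun j => toEuclideanLin_eig (hbB j)
  have quadEq : ∀ x : EuclideanSpace ℝ (Fin M),
      (inner ℝ x (TB x) : ℝ) = (inner ℝ x (TA x) : ℝ) + (v ⬝ᵥ (x : Fin M → ℝ))^2 := by
    intro x
    rw [hTA, hTB, inner_toEuclideanLin, inner_toEuclideanLin, Matrix.add_mulVec,
      dotProduct_add, vecMulVec_quadratic]
  have quadLe : ∀ x : EuclideanSpace ℝ (Fin M),
      (inner ℝ x (TA x) : ℝ) ≤ (inner ℝ x (TB x) : ℝ) := fun x => by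
    rw [quadEq x]; nlinarith [sq_nonneg (v ⬝ᵥ (x : Fin M → ℝ))]
  constructor
  · -- lamA i ≤ lamB i
    intro i
    obtain ⟨x, hmem, hx0⟩ := exists_ne_zero_mem_inf
      (span ℝ (bA '' ↑(Finset.Iic i))) (span ℝ (bB '' ↑(Finset.Ici i))) (by
        rw [finrank_span_onb_image, finrank_span_onb_image, Fin.card_Iic, Fin.card_Ici]
        have := i.isLt; omega)
    have hnorm : (0:ℝ) < ‖x‖^2 := by
      have := norm_pos_iff.mpr hx0
      positivity
    have h1 : lamA i * ‖x‖^2 ≤ (inner ℝ x (TA x) : ℝ) :=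
      rayleigh_ge_of_mem_span TA bA lamA hEigA (Finset.Iic i) (lamA i)
        (fun j hj => hla (Finset.mem_Iic.mp hj)) hmem.1
    have h2 : (inner ℝ x (TB x) : ℝ) ≤ lamB i * ‖x‖^2 :=
      rayleigh_le_of_mem_span TB bB lamB hEigB (Finset.Ici i) (lamB i)
        (fun j hj => hlb (Finset.mem_Ici.mp hj)) hmem.2
    have := h1.trans ((quadLe x).trans h2)
    exact le_of_mul_le_mul_right (by linarith) hnorm
  · -- lamB j ≤ lamA i for i+1 = j
    intro i j hij
    set K : Submodule ℝ (EuclideanSpace ℝ (Fin M)) :=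
      (ℝ ∙ ((WithLp.equiv 2 (Fin M → ℝ)).symm v))ᗮ with hK
    have hV3 : M - 1 ≤ Module.finrank ℝ K := by
      have h2 : Module.finrank ℝ ↥(ℝ ∙ ((WithLp.equiv 2 (Fin M → ℝ)).symm v)) ≤ 1 := by
        rcases eq_or_ne ((WithLp.equiv 2 (Fin M → ℝ)).symm v) 0 with h | h
        · rw [h, Submodule.span_zero_singleton]
          simp
        · rw [finrank_span_singleton h]
      have h1 : Module.finrank ℝ ↥(ℝ ∙ ((WithLp.equiv 2 (Fin M → ℝ)).symm v))
          + Module.finrank ℝ K = M := by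
        rw [hK]
        have := Submodule.finrank_add_finrank_orthogonal
          (K := ℝ ∙ ((WithLp.equiv 2 (Fin M → ℝ)).symm v))
        rwa [finrank_euclideanSpace, Fintype.card_fin] at this
      omega
    have hW := finrank_inf_ge (span ℝ (bA '' ↑(Finset.Ici i))) K
    rw [finrank_span_onb_image, Fin.card_Ici] at hW
    obtain ⟨x, hmem, hx0⟩ := exists_ne_zero_mem_inf
      (span ℝ (bB '' ↑(Finset.Iic j))) (span ℝ (bA '' ↑(Finset.Ici i)) ⊓ K) (by
        rw [finrank_span_onb_image, Fin.card_Iic]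
        have := i.isLt; have := j.isLt; omega)
    have hnorm : (0:ℝ) < ‖x‖^2 := by
      have := norm_pos_iff.mpr hx0
      positivity
    have hvx : v ⬝ᵥ (x : Fin M → ℝ) = 0 := by
      have hxK : x ∈ K := hmem.2.2
      rw [hK] at hxK
      have := Submodule.mem_orthogonal_singleton_iff_inner_right.mp hxK
      rw [← this]
      simp [PiLp.inner_apply, dotProduct, mul_comm]
    have h1 : lamB j * ‖x‖^2 ≤ (inner ℝ x (TB x) : ℝ) :=
      rayleigh_ge_of_mem_span TB bB lamB hEigB (Finset.Iic j) (lamB j)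
        (fun k hk => hlb (Finset.mem_Iic.mp hk)) hmem.1
    have h2 : (inner ℝ x (TA x) : ℝ) ≤ lamA i * ‖x‖^2 :=
      rayleigh_le_of_mem_span TA bA lamA hEigA (Finset.Ici i) (lamA i)
        (fun k hk => hla (Finset.mem_Ici.mp hk)) hmem.2.1
    have h3 : (inner ℝ x (TB x) : ℝ) = (inner ℝ x (TA x) : ℝ) := by
      rw [quadEq x, hvx]; ring
    have := h1.trans (h3.le.trans h2)
    exact le_of_mul_le_mul_right (by linarith) hnorm


end AuxEigensteps

/-- The spectra of the partial frame operators `FₙFₙ* = Σ_{k<n} f_k f_k*` of any sequence of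
vectors form a valid sequence of outer eigensteps: they start at zero, consecutive spectra
interlace, and the `n`-th spectrum sums to `Σ_{k<n} ‖f_k‖²` (so the final one is
the spectrum of `FF*`). -/
theorem partial_frame_operators_are_eigensteps (M N : ℕ) (f : ℕ → (Fin M → ℝ))
    (L : ℕ → Fin M → ℝ) (hL : ∀ n, Antitone (L n))
    (heig : ∀ n, n ≤ N →
      (∑ k ∈ Finset.range n, Matrix.vecMulVec (f k) (f k)).charpoly.roots =
        Multiset.map (L n) Finset.univ.val) :
    (∀ m : Fin M, L 0 m = 0) ∧
    (∀ n, 1 ≤ n → n ≤ N → InterlacesOn M (L (n - 1)) (L n)) ∧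
    (∀ n, n ≤ N → ∑ m : Fin M, L n m = ∑ k ∈ Finset.range n, ∑ i : Fin M, (f k i) ^ 2) := by
  refine ⟨?_, ?_, ?_⟩
  · -- L 0 = 0
    intro m
    have h0 := heig 0 (Nat.zero_le N)
    rw [Finset.range_zero, Finset.sum_empty] at h0
    rw [show (0 : Matrix (Fin M) (Fin M) ℝ) = Matrix.diagonal (fun _ => (0:ℝ)) by simp,
      roots_charpoly_diagonal] at h0
    have hmem : L 0 m ∈ Multiset.map (L 0) Finset.univ.val :=
      Multiset.mem_map_of_mem _ (Finset.mem_univ_val m)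
    rw [← h0] at hmem
    have : Multiset.map (fun _ : Fin M => (0:ℝ)) Finset.univ.val =
        Multiset.replicate M 0 := by
      rw [Multiset.map_const']
      congr 1
      simpa using congrArg Multiset.card (rfl : (Finset.univ.val : Multiset (Fin M)) = _)
    rw [this] at hmem
    exact Multiset.eq_of_mem_replicate hmem
  · -- interlacing
    intro n h1n hnN
    have hsplit : (∑ k ∈ Finset.range n, Matrix.vecMulVec (f k) (f k)) =
        (∑ k ∈ Finset.range (n-1), Matrix.vecMulVec (f k) (f k)) +
          Matrix.vecMulVec (f (n-1)) (f (n-1)) := by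
      conv_lhs => rw [show n = (n-1) + 1 by omega]
      rw [Finset.sum_range_succ]
    have hra := heig (n-1) (by omega)
    have hrb := heig n hnN
    rw [hsplit] at hrb
    exact interlace_step (isHermitian_sum_vecMulVec (n-1) f)
      (hsplit ▸ isHermitian_sum_vecMulVec n f) (hL (n-1)) (hL n) hra hrb
  · -- trace
    intro n hnN
    set A := ∑ k ∈ Finset.range n, Matrix.vecMulVec (f k) (f k) with hA
    have hroots := heig n hnN
    have hcard : A.charpoly.roots.card = M := by
      rw [hroots, Multiset.card_map]
      simpa using congrArg Multiset.card (rfl : (Finset.univ.val : Multiset (Fin M)) = _)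
    have hsplits : A.charpoly.Splits := by
      apply (Polynomial.splits_iff_card_roots).mpr
      rw [hcard, Matrix.charpoly_natDegree_eq_dim, Fintype.card_fin]
    have htr := Matrix.trace_eq_sum_roots_charpoly_of_splits hsplits
    have hsum : (Matrix.charpoly A).roots.sum = ∑ m : Fin M, L n m := by
      rw [hroots]
      rfl
    have htrace : A.trace = ∑ k ∈ Finset.range n, ∑ i : Fin M, (f k i)^2 := by
      rw [hA, Matrix.trace_sum]
      refine Finset.sum_congr rfl fun k _ => ?_
      simp [Matrix.trace, Matrix.diag, Matrix.vecMulVec_apply, sq]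
    rw [← hsum, ← htr, htrace]
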